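/- Let D be a Borel probability distribution on ℝ_{≥0}^k with BRev(D) > 0, let c > 0, ε > 0, a ∈ {0,1}, and let M = (q,p) be an incentive-compatible, individually rational mechanism with p measurable such that for every v in the support of D with p(v) > 0 there exists j ∈ ℕ_{≥1} with p(v) ∈ I_j := [c·2^{2(j−1)+a}, c·2^{2(j−1)+a+1}), and such that p(v) = 0 for v outside these sets. For j ∈ ℕ_{≥1} let B_j := {v ∈ supp(D) : p(v) ∈ I_j}, let J := {j : B_j ≠ ∅}, and for each j ∈ J choose x_j ∈ B_j with ‖x_j‖₁ ≤ (1+ε)·‖v‖₁ for all v ∈ B_j, and set q_j := q(x_j). Let X be the sequence (x_j)_{j∈J} and Q the sequence (q_j)_{j∈J} (prepended by q_0 = 0), both ordered by increasing j. Then 4·(1+ε)·BRev(D)·MenuGap(X,Q) ≥ Rev(D,M). -/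

import Mathlib

open scoped BigOperators ENNReal NNReal
open Filter MeasureTheory

noncomputable section

namespace Stmt7

/-- Valuation / allocation vectors over `k` items. -/
abbrev V (k : ℕ) := Fin k → ℝ

/-- Dot product. -/
def dot {k : ℕ} (x y : V k) : ℝ := ∑ t, x t * y t

/-- ℓ¹ norm. -/
def norm1 {k : ℕ} (x : V k) : ℝ := ∑ t, |x t|

/-- Sum of a (possibly divergent) series, as limsup of partial sums in `EReal`. -/
def eseries (f : ℕ → ℝ) : EReal :=
  Filter.limsup (fun n => ((∑ i ∈ Finset.range n, f i : ℝ) : EReal)) Filter.atTop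

/-- `gap_i^{X,Q} := min_{0 ≤ j < i} (q_i - q_j)·x_i`, the minimum ranging over the
indices of `S` before `i` together with the index `0` (where `Q 0 = 0`). -/
def gapS {k : ℕ} (S : Set ℕ) (X Q : ℕ → V k) (i : ℕ) : ℝ :=
  sInf {y | ∃ j : ℕ, (j ∈ S ∨ j = 0) ∧ j < i ∧ y = dot (Q i - Q j) (X i)}

/-- `MenuGap(X,Q) := ∑_i gap_i^{X,Q}/‖x_i‖₁`, summing over indices in `S` in
increasing order. -/
def menuGapS {k : ℕ} (S : Set ℕ) (X Q : ℕ → V k) : EReal :=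
  eseries (S.indicator fun i => gapS S X Q i / norm1 (X i))

/-- `BRev(D) := sup_{t > 0} t · Pr_{v ∼ D}[∑ i, v i ≥ t]`. -/
def brev {k : ℕ} (μ : Measure (V k)) : ℝ≥0∞ :=
  ⨆ t : ℝ, ⨆ (_ : (0:ℝ) < t), ENNReal.ofReal t * μ {v | t ≤ ∑ i, v i}

/-- Topological support of a measure. -/
def msupport {k : ℕ} (μ : Measure (V k)) : Set (V k) :=
  {x | ∀ U : Set (V k), IsOpen U → x ∈ U → 0 < μ U}

/-- The dyadic price interval `I_j = [c·2^{2(j-1)+a}, c·2^{2(j-1)+a+1})`. -/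
def Ico' (c : ℝ) (a j : ℕ) : Set ℝ :=
  Set.Ico (c * 2 ^ (2*(j-1)+a)) (c * 2 ^ (2*(j-1)+a+1))

/-- `B_j := {v ∈ supp(D) : p(v) ∈ I_j}`. -/
def Bset {k : ℕ} (μ : Measure (V k)) (p : V k → ℝ) (c : ℝ) (a j : ℕ) : Set (V k) :=
  {v | v ∈ msupport μ ∧ p v ∈ Ico' c a j}

/-! ### Auxiliary lemmas -/

lemma dot_comm {k : ℕ} (x y : V k) : dot x y = dot y x := by
  unfold dot; exact Finset.sum_congr rfl fun t _ => mul_comm _ _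

lemma dot_sub_left {k : ℕ} (x y v : V k) : dot (x - y) v = dot x v - dot y v := by
  unfold dot
  rw [← Finset.sum_sub_distrib]
  exact Finset.sum_congr rfl fun t _ => by simp [sub_mul]

lemma dot_zero_left {k : ℕ} (v : V k) : dot (0 : V k) v = 0 := by
  unfold dot; simp

lemma dot_le_norm1 {k : ℕ} (v w : V k) (hv : ∀ t, 0 ≤ v t) (hw : ∀ t, w t ≤ 1) :
    dot v w ≤ norm1 v := by
  unfold dot norm1
  refine Finset.sum_le_sum fun t _ => ?_
  rw [abs_of_nonneg (hv t)]
  calc v t * w t ≤ v t * 1 := by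
        rcases le_or_gt (w t) 0 with h | h
        · nlinarith [hv t]
        · exact mul_le_mul_of_nonneg_left (hw t) (hv t)
    _ = v t := mul_one _

lemma norm1_eq_sum {k : ℕ} (v : V k) (hv : ∀ t, 0 ≤ v t) : norm1 v = ∑ t, v t := by
  unfold norm1; exact Finset.sum_congr rfl fun t _ => abs_of_nonneg (hv t)

lemma msupport_compl_eq {k : ℕ} (μ : Measure (V k)) :
    (msupport μ)ᶜ = ⋃₀ {U | IsOpen U ∧ μ U = 0} := by
  ext v
  simp only [Set.mem_compl_iff, msupport, Set.mem_setOf_eq, Set.mem_sUnion, not_forall]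
  constructor
  · rintro ⟨U, hU, hvU, hle⟩
    exact ⟨U, ⟨hU, by simpa [pos_iff_ne_zero] using hle⟩, hvU⟩
  · rintro ⟨U, ⟨hU, hU0⟩, hvU⟩
    exact ⟨U, hU, hvU, by simp [hU0]⟩

lemma isClosed_msupport {k : ℕ} (μ : Measure (V k)) : IsClosed (msupport μ) := by
  rw [← compl_compl (msupport μ), msupport_compl_eq]
  exact (isOpen_sUnion fun U hU => hU.1).isClosed_compl

lemma msupport_compl_null {k : ℕ} (μ : Measure (V k)) : μ (msupport μ)ᶜ = 0 := by
  rw [msupport_compl_eq]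
  obtain ⟨b, hbc, -, hb⟩ := TopologicalSpace.exists_countable_basis (V k)
  have hsub : ⋃₀ {U | IsOpen U ∧ μ U = 0} ⊆ ⋃₀ {U ∈ b | μ U = 0} := by
    rintro v ⟨U, ⟨hU, hU0⟩, hvU⟩
    obtain ⟨W, hWb, hvW, hWU⟩ := hb.exists_subset_of_mem_open hvU hU
    exact ⟨W, ⟨hWb, measure_mono_null hWU hU0⟩, hvW⟩
  refine measure_mono_null hsub ?_
  exact (measure_sUnion_null_iff (hbc.mono (Set.sep_subset _ _))).2 fun s hs => hs.2

lemma eseries_of_summable {f : ℕ → ℝ} (h : Summable f) :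
    eseries f = ((∑' i, f i : ℝ) : EReal) :=
  Filter.Tendsto.limsup_eq ((EReal.tendsto_coe).2 h.hasSum.tendsto_sum_nat)

lemma eseries_eq_top {f : ℕ → ℝ}
    (h : Tendsto (fun n => ∑ i ∈ Finset.range n, f i) atTop atTop) :
    eseries f = ⊤ := by
  refine Filter.Tendsto.limsup_eq ?_
  rw [EReal.tendsto_nhds_top_iff_real]
  intro y
  filter_upwards [h.eventually_ge_atTop (y + 1)] with n hn
  exact_mod_cast lt_of_lt_of_le (by linarith) hn

lemma le_eseries {f : ℕ → ℝ} (hf : ∀ n, 0 ≤ f n) (j : ℕ) :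
    ((f j : ℝ) : EReal) ≤ eseries f := by
  refine le_limsup_of_frequently_le' (Filter.Eventually.frequently ?_)
  filter_upwards [Filter.eventually_ge_atTop (j + 1)] with n hn
  exact EReal.coe_le_coe_iff.2 (Finset.single_le_sum (fun i _ => hf i) (Finset.mem_range.2 hn))

lemma eseries_zero : eseries (fun _ => (0:ℝ)) = 0 := by
  have h : (fun n => ((∑ i ∈ Finset.range n, (0:ℝ) : ℝ) : EReal)) = fun _ => (0 : EReal) := by
    funext n; simp
  rw [eseries, h, Filter.limsup_const]

theorem stmt7 (k : ℕ) (μ : Measure (V k)) [IsProbabilityMeasure μ]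
    (hsupp : msupport μ ⊆ {v | ∀ t, 0 ≤ v t})
    (hb0 : 0 < brev μ)
    (c ε : ℝ) (hc : 0 < c) (hε : 0 < ε) (a : ℕ) (ha : a = 0 ∨ a = 1)
    (q : V k → V k) (p : V k → ℝ)
    (hq : ∀ v t, q v t ∈ Set.Icc (0:ℝ) 1)
    (hpnn : ∀ v, 0 ≤ p v)
    (hIC : ∀ v w : V k, (∀ t, 0 ≤ v t) → (∀ t, 0 ≤ w t) →
      dot v (q w) - p w ≤ dot v (q v) - p v)
    (hIR : ∀ v : V k, (∀ t, 0 ≤ v t) → 0 ≤ dot v (q v) - p v)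
    (hpmeas : Measurable p) (hpint : Integrable p μ)
    -- dyadic prices on the support
    (hdyadic : ∀ v ∈ msupport μ, p v = 0 ∨ ∃ j : ℕ, 1 ≤ j ∧ p v ∈ Ico' c a j)
    -- the chosen representatives x_j ∈ B_j, of nearly minimal ℓ¹ norm
    (x : ℕ → V k)
    (hx : ∀ j : ℕ, 1 ≤ j → (Bset μ p c a j).Nonempty →
      x j ∈ Bset μ p c a j ∧ ∀ v ∈ Bset μ p c a j, norm1 (x j) ≤ (1 + ε) * norm1 v) :
    -- conclusion: 4(1+ε)·BRev(D)·MenuGap(X,Q) ≥ Rev(D,M)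
    (((∫ v, p v ∂μ : ℝ)) : EReal) ≤
      ((4 : ℝ) : EReal) * (((1 + ε : ℝ)) : EReal) * ((brev μ : ℝ≥0∞) : EReal) *
        menuGapS {j | 1 ≤ j ∧ (Bset μ p c a j).Nonempty} x
          (fun j => if j = 0 then (0 : V k) else q (x j)) := by
  classical
  set S : Set ℕ := {j | 1 ≤ j ∧ (Bset μ p c a j).Nonempty} with hSdef
  set Q : ℕ → V k := fun j => if j = 0 then (0 : V k) else q (x j) with hQdef
  set L : ℕ → ℝ := fun j => c * 2 ^ (2*(j-1)+a) with hLdef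
  set g : ℕ → ℝ := S.indicator (fun i => gapS S x Q i / norm1 (x i)) with hgdef
  have hmenu : menuGapS S x Q = eseries g := rfl
  have h1ε : (0:ℝ) < 1 + ε := by linarith
  have hLpos : ∀ j, 0 < L j := fun j => by positivity
  -- basic interval facts
  have hIcoL : ∀ j, ∀ r ∈ Ico' c a j, L j ≤ r ∧ r < 2 * L j := by
    intro j r hr
    refine ⟨hr.1, lt_of_lt_of_le hr.2 ?_⟩
    rw [hLdef]
    simp only [pow_succ]
    ring_nf
    exact le_refl _
  have h4L : ∀ j' j : ℕ, 1 ≤ j' → j' < j → 4 * L j' ≤ L j := by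
    intro j' j h1 h2
    have he : 2*(j'-1)+a+2 ≤ 2*(j-1)+a := by omega
    have hp : (2:ℝ)^(2*(j'-1)+a) * 4 ≤ 2^(2*(j-1)+a) := by
      calc (2:ℝ)^(2*(j'-1)+a)*4 = 2^(2*(j'-1)+a+2) := by
            rw [pow_add (2:ℝ) (2*(j'-1)+a) 2]; norm_num
      _ ≤ _ := pow_le_pow_right₀ one_le_two he
    simp only [hLdef]
    nlinarith
  -- facts about representatives
  have hdotIR : ∀ v : V k, (∀ t, 0 ≤ v t) → p v ≤ dot v (q v) := by
    intro v hv; have := hIR v hv; linarith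
  have hxmem : ∀ j ∈ S, x j ∈ Bset μ p c a j := fun j hj => (hx j hj.1 hj.2).1
  have hxnn : ∀ j ∈ S, ∀ t, 0 ≤ x j t := fun j hj => hsupp (hxmem j hj).1
  have hpx : ∀ j ∈ S, L j ≤ p (x j) ∧ p (x j) < 2 * L j :=
    fun j hj => hIcoL j _ (hxmem j hj).2
  have hn1 : ∀ j ∈ S, L j ≤ norm1 (x j) := by
    intro j hj
    calc L j ≤ p (x j) := (hpx j hj).1
      _ ≤ dot (x j) (q (x j)) := hdotIR _ (hxnn j hj)
      _ ≤ norm1 (x j) := dot_le_norm1 _ _ (hxnn j hj) (fun t => (hq _ t).2)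
  have hn1pos : ∀ j ∈ S, 0 < norm1 (x j) := fun j hj => lt_of_lt_of_le (hLpos j) (hn1 j hj)
  -- the gap lower bound
  have hgap : ∀ j ∈ S, L j / 2 ≤ gapS S x Q j := by
    intro j hj
    have hj1 : 1 ≤ j := hj.1
    refine le_csInf ⟨_, 0, Or.inr rfl, hj1, rfl⟩ ?_
    rintro y ⟨j', hj', hlt, rfl⟩
    have hQj : Q j = q (x j) := by simp [hQdef, Nat.one_le_iff_ne_zero.1 hj1]
    rcases hj' with hj'S | rfl
    · -- j' ∈ S
      have hQj' : Q j' = q (x j') := by simp [hQdef, Nat.one_le_iff_ne_zero.1 hj'S.1]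
      have hic := hIC (x j) (x j') (hxnn j hj) (hxnn j' hj'S)
      have h4 := h4L j' j hj'S.1 hlt
      have hpj' := (hpx j' hj'S).2
      have hpj := (hpx j hj).1
      rw [dot_sub_left, hQj, hQj', dot_comm (q (x j)) (x j), dot_comm (q (x j')) (x j)]
      linarith
    · -- j' = 0
      have hQ0 : Q 0 = 0 := by simp [hQdef]
      rw [dot_sub_left, hQ0, dot_zero_left, hQj, dot_comm]
      have := hdotIR (x j) (hxnn j hj)
      have := (hpx j hj).1
      have := hLpos j
      linarith
  -- lower bound for g
  have hgS : ∀ j ∈ S, L j / 2 / norm1 (x j) ≤ g j := by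
    intro j hj
    rw [hgdef, Set.indicator_of_mem hj]
    exact (div_le_div_iff_of_pos_right (hn1pos j hj)).2 (hgap j hj)
  have hgnn : ∀ j, 0 ≤ g j := by
    intro j
    by_cases hj : j ∈ S
    · exact le_trans (div_nonneg (div_nonneg (hLpos j).le (by norm_num)) (hn1pos j hj).le)
        (hgS j hj)
    · rw [hgdef, Set.indicator_of_notMem hj]
  have hgpos : ∀ j ∈ S, 0 < g j := fun j hj =>
    lt_of_lt_of_le (div_pos (div_pos (hLpos j) two_pos) (hn1pos j hj)) (hgS j hj)
  -- measurability of the B_j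
  have hBmeas : ∀ j, MeasurableSet (Bset μ p c a j) := by
    intro j
    have he : Bset μ p c a j = msupport μ ∩ p ⁻¹' (Ico' c a j) := rfl
    rw [he]
    exact (isClosed_msupport μ).measurableSet.inter (hpmeas measurableSet_Ico)
  set s : ℕ → Set (V k) := fun j => if 1 ≤ j then Bset μ p c a j else ∅ with hsdef
  have hsmeas : ∀ j, MeasurableSet (s j) := by
    intro j
    rw [hsdef]; dsimp only
    split
    · exact hBmeas j
    · exact MeasurableSet.empty
  have hIcoDisj : ∀ i j : ℕ, 1 ≤ i → i < j → Disjoint (Bset μ p c a i) (Bset μ p c a j) := by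
    intro i j h1 h2
    refine Set.disjoint_left.2 ?_
    rintro v ⟨-, hvi⟩ ⟨-, hvj⟩
    have he : 2*(i-1)+a+1 ≤ 2*(j-1)+a := by omega
    have hp2 : (2:ℝ)^(2*(i-1)+a+1) ≤ 2^(2*(j-1)+a) := pow_le_pow_right₀ one_le_two he
    simp only [Ico', Set.mem_Ico] at hvi hvj
    nlinarith [hvi.2, hvj.1, mul_le_mul_of_nonneg_left hp2 hc.le]
  have hsd : ∀ i j : ℕ, i < j → Disjoint (s i) (s j) := by
    intro i j h
    by_cases hi : 1 ≤ i
    · have hj : 1 ≤ j := by omega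
      rw [hsdef]; dsimp only; rw [if_pos hi, if_pos hj]
      exact hIcoDisj i j hi h
    · rw [hsdef]; dsimp only; rw [if_neg hi]
      exact Set.disjoint_left.2 fun _ h => absurd h (Set.notMem_empty _)
  have hsdisj : Pairwise (Function.onFun Disjoint s) := fun i j hij => by
    rcases lt_or_gt_of_ne hij with h | h
    · exact hsd i j h
    · exact (hsd j i h).symm
  have haeS : ∀ᵐ v ∂μ, v ∈ msupport μ := by
    rw [MeasureTheory.ae_iff]
    exact msupport_compl_null μ
  have hae : ∀ᵐ v ∂μ, v ∉ (⋃ j, s j) → p v = 0 := by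
    filter_upwards [haeS] with v hv hnot
    rcases hdyadic v hv with h0 | ⟨j, hj1, hpj⟩
    · exact h0
    · exact absurd (Set.mem_iUnion.2 ⟨j, by rw [hsdef]; dsimp only; rw [if_pos hj1]; exact ⟨hv, hpj⟩⟩) hnot
  have hI1 : ∫ v, p v ∂μ = ∫ v in (⋃ j, s j), p v ∂μ :=
    (setIntegral_eq_integral_of_ae_compl_eq_zero hae).symm
  have hI2 : ∫ v in (⋃ j, s j), p v ∂μ = ∑' j, ∫ v in s j, p v ∂μ :=
    integral_iUnion hsmeas hsdisj hpint.integrableOn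
  set F : ℕ → ℝ := fun j => ∫ v in s j, p v ∂μ with hFdef
  have hFnn : ∀ j, 0 ≤ F j := fun j => setIntegral_nonneg (hsmeas j) fun v _ => hpnn v
  have hFsum : ∫ v, p v ∂μ = ∑' j, F j := hI1.trans hI2
  rcases Set.eq_empty_or_nonempty S with hSe | hSne
  · -- S is empty : both sides vanish
    have hpz : ∀ᵐ v ∂μ, p v = 0 := by
      filter_upwards [haeS] with v hv
      rcases hdyadic v hv with h0 | ⟨j, hj1, hpj⟩
      · exact h0
      · exact absurd (show j ∈ S from ⟨hj1, ⟨v, hv, hpj⟩⟩) (by rw [hSe]; exact Set.notMem_empty j)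
    have h0 : ∫ v, p v ∂μ = 0 := integral_eq_zero_of_ae hpz
    have hg0 : g = fun _ => (0:ℝ) := by rw [hgdef, hSe]; simp
    rw [h0, hmenu, hg0, eseries_zero, mul_zero]
    simp
  · rcases eq_or_ne (brev μ) ⊤ with hbt | hbt
    · -- infinite BRev
      obtain ⟨j0, hj0⟩ := hSne
      have hmtop : 0 < menuGapS S x Q := by
        rw [hmenu]
        exact lt_of_lt_of_le (EReal.coe_pos.2 (hgpos j0 hj0)) (le_eseries hgnn j0)
      have hRHS : ((4:ℝ):EReal) * ((1+ε:ℝ):EReal) * ((brev μ : ℝ≥0∞):EReal) * menuGapS S x Q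
          = ⊤ := by
        rw [hbt, EReal.coe_ennreal_top, ← EReal.coe_mul,
          EReal.coe_mul_top_of_pos (by nlinarith), EReal.top_mul_of_pos hmtop]
      rw [hRHS]
      exact le_top
    · -- finite BRev
      set B : ℝ := (brev μ).toReal with hBdef
      have hBpos : 0 < B := ENNReal.toReal_pos (ne_of_gt hb0) hbt
      set K : ℝ := 4 * (1 + ε) * B with hKdef
      have hKpos : 0 < K := by rw [hKdef]; nlinarith
      have hKey : ∀ j, F j ≤ K * g j := by
        intro j
        by_cases hj : j ∈ S
        · have hsj : s j = Bset μ p c a j := by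
            rw [hsdef]; dsimp only; rw [if_pos hj.1]
          have hnpos := hn1pos j hj
          have htpos : 0 < norm1 (x j) / (1 + ε) := div_pos hnpos h1ε
          have hsubset : Bset μ p c a j ⊆ {v | norm1 (x j) / (1+ε) ≤ ∑ i, v i} := by
            intro v hv
            have hvnn := hsupp hv.1
            have hmin := (hx j hj.1 hj.2).2 v hv
            rw [Set.mem_setOf_eq, ← norm1_eq_sum v hvnn, div_le_iff₀ h1ε]
            linarith
          have hμle : ENNReal.ofReal (norm1 (x j)/(1+ε)) * μ (Bset μ p c a j) ≤ brev μ :=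
            calc ENNReal.ofReal (norm1 (x j)/(1+ε)) * μ (Bset μ p c a j)
                ≤ ENNReal.ofReal (norm1 (x j)/(1+ε)) * μ {v | norm1 (x j)/(1+ε) ≤ ∑ i, v i} :=
                  mul_le_mul_right (measure_mono hsubset) _
              _ ≤ brev μ := le_iSup₂_of_le (norm1 (x j)/(1+ε)) htpos le_rfl
          set m : ℝ := (μ (Bset μ p c a j)).toReal with hmdef
          have hmnn : 0 ≤ m := ENNReal.toReal_nonneg
          have hmreal : norm1 (x j)/(1+ε) * m ≤ B := by
            have h := ENNReal.toReal_mono hbt hμle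
            rwa [ENNReal.toReal_mul, ENNReal.toReal_ofReal htpos.le] at h
          have hmn : norm1 (x j) * m ≤ (1+ε) * B := by
            rw [div_mul_eq_mul_div, div_le_iff₀ h1ε] at hmreal
            linarith
          have hμfin : μ (Bset μ p c a j) < ⊤ := measure_lt_top μ _
          have hFle : F j ≤ 2 * L j * m := by
            rw [hFdef]; dsimp only; rw [hsj]
            calc ∫ v in Bset μ p c a j, p v ∂μ
                ≤ ∫ _ in Bset μ p c a j, 2 * L j ∂μ :=
                  setIntegral_mono_on hpint.integrableOn
                    (integrableOn_const hμfin.ne) (hBmeas j)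
                    (fun v hv => le_of_lt (hIcoL j _ hv.2).2)
              _ = m * (2 * L j) := by rw [setIntegral_const, smul_eq_mul]; rfl
              _ = 2 * L j * m := mul_comm _ _
          have hstep : 2 * L j * m ≤ K * (L j / 2 / norm1 (x j)) := by
            rw [hKdef, div_div, mul_div_assoc']
            rw [le_div_iff₀ (by positivity)]
            nlinarith [hLpos j, hmn]
          calc F j ≤ 2 * L j * m := hFle
            _ ≤ K * (L j / 2 / norm1 (x j)) := hstep
            _ ≤ K * g j := mul_le_mul_of_nonneg_left (hgS j hj) hKpos.le
        · have hsje : s j = ∅ := by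
            rw [hsdef]; dsimp only
            split_ifs with h1
            · by_contra hne
              exact hj ⟨h1, Set.nonempty_iff_ne_empty.2 hne⟩
            · rfl
          have hFj : F j = 0 := by
            rw [hFdef]; dsimp only; rw [hsje]
            simp
          rw [hFj]
          exact mul_nonneg hKpos.le (hgnn j)
      have hbrevE : ((brev μ : ℝ≥0∞) : EReal) = ((B:ℝ) : EReal) := by
        conv_lhs => rw [← ENNReal.ofReal_toReal hbt]
        rw [EReal.coe_ennreal_ofReal, max_eq_left hBpos.le]
      by_cases hsumm : Summable g
      · have hKg : Summable (fun j => K * g j) := hsumm.mul_left K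
        have hFsummable : Summable F := Summable.of_nonneg_of_le hFnn hKey hKg
        have htle : ∑' j, F j ≤ K * ∑' j, g j :=
          calc ∑' j, F j ≤ ∑' j, K * g j := Summable.tsum_le_tsum hKey hFsummable hKg
            _ = K * ∑' j, g j := tsum_mul_left
        rw [hmenu, eseries_of_summable hsumm, hbrevE, ← EReal.coe_mul, ← EReal.coe_mul,
          ← EReal.coe_mul]
        refine EReal.coe_le_coe_iff.2 ?_
        rw [hFsum]
        calc ∑' j, F j ≤ K * ∑' j, g j := htle
          _ = 4 * (1+ε) * B * ∑' j, g j := by rw [hKdef]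
      · have htop : eseries g = ⊤ :=
          eseries_eq_top ((not_summable_iff_tendsto_nat_atTop_of_nonneg hgnn).1 hsumm)
        have hC : (0:EReal) < ((4:ℝ):EReal) * ((1+ε:ℝ):EReal) * ((brev μ : ℝ≥0∞):EReal) := by
          refine EReal.mul_pos (EReal.mul_pos ?_ ?_) ?_
          · exact EReal.coe_pos.2 (by norm_num)
          · exact EReal.coe_pos.2 h1ε
          · exact EReal.coe_ennreal_pos.2 hb0
        rw [hmenu, htop, EReal.mul_top_of_pos hC]
        exact le_top

end Stmt7
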